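/- Let F ∈ ℂ[[λ,μ]] satisfy F(λ,μ) = F(μ,λ), F(λ,μ) = F(−λ,−μ), and F(λ,0) = 1 (where F(λ,0) denotes substitution μ ↦ 0). Then F satisfies the identity (λ+μ)·F(λ,μ) = λ·e^{μ}·F(μ,−λ−μ) + μ·e^{−λ}·F(λ,−λ−μ) in ℂ[[λ,μ]] if and only if there exists h ∈ ℂ[[λ,μ]] with h(λ,μ) = h(μ,λ) = h(−λ,−μ) = h(λ,−λ−μ), satisfying the boundary condition (e^{λ} − e^{−λ})·h(λ,0) = 2λ in ℂ[[λ]], such that 2(λ+μ)·F(λ,μ) = (e^{λ+μ} − e^{−λ−μ})·h(λ,μ). -/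

import Mathlib

noncomputable section

open Finset MvPowerSeries

/-- Total degree of a monomial in two variables. -/
def deg (d : Fin 2 →₀ ℕ) : ℕ := d 0 + d 1

/-- Formal substitution `f(p, q)` of two polynomials `p`, `q` with zero constant term
for the variables of a two-variable formal power series `f`: the coefficient of a
monomial `d` in `f(p,q)` is `∑_{i,j} (coeff of λ^i μ^j in f) ⬝ (coeff of d in pⁱ·qʲ)`,
a finite sum since `coeff d (pⁱ·qʲ) = 0` whenever `i + j > deg d`. -/
def sub2 (p q : MvPolynomial (Fin 2) ℂ) (f : MvPowerSeries (Fin 2) ℂ) :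
    MvPowerSeries (Fin 2) ℂ :=
  fun d => ∑ ij ∈ Finset.range (deg d + 1) ×ˢ Finset.range (deg d + 1),
    MvPowerSeries.coeff (Finsupp.single 0 ij.1 + Finsupp.single 1 ij.2) f *
      MvPolynomial.coeff d (p ^ ij.1 * q ^ ij.2)

/-- The formal exponential `exp g = ∑ₖ gᵏ/k!` of a two-variable formal power series `g`
with zero constant term. -/
def expMv (g : MvPowerSeries (Fin 2) ℂ) : MvPowerSeries (Fin 2) ℂ :=
  fun d => ∑ k ∈ Finset.range (deg d + 1), MvPowerSeries.coeff d (g ^ k) / (k.factorial : ℂ)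

/-- `f(μ, −λ−μ)`. -/
def s₁ (f : MvPowerSeries (Fin 2) ℂ) : MvPowerSeries (Fin 2) ℂ :=
  sub2 (MvPolynomial.X 1) (-MvPolynomial.X 0 - MvPolynomial.X 1) f

/-- `f(λ, −λ−μ)`. -/
def s₂ (f : MvPowerSeries (Fin 2) ℂ) : MvPowerSeries (Fin 2) ℂ :=
  sub2 (MvPolynomial.X 0) (-MvPolynomial.X 0 - MvPolynomial.X 1) f

/-- `f(μ, λ)`. -/
def swapS (f : MvPowerSeries (Fin 2) ℂ) : MvPowerSeries (Fin 2) ℂ :=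
  sub2 (MvPolynomial.X 1) (MvPolynomial.X 0) f

/-- `f(−λ, −μ)`. -/
def negS (f : MvPowerSeries (Fin 2) ℂ) : MvPowerSeries (Fin 2) ℂ :=
  sub2 (-MvPolynomial.X 0) (-MvPolynomial.X 1) f

/-- Equation (1.5b), the compressed hexagon equation:
`λμ(λ+μ)·( f(λ,μ) + e^{μ}·f(μ,−λ−μ) + e^{−λ}·f(λ,−λ−μ) ) = λ(e^{μ} − 1) + μ(e^{−λ} − 1)`. -/
def Eq15b (f : MvPowerSeries (Fin 2) ℂ) : Prop :=
  (X 0 : MvPowerSeries (Fin 2) ℂ) * X 1 * (X 0 + X 1) *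
      (f + expMv (X 1) * s₁ f + expMv (-X 0) * s₂ f)
    = X 0 * (expMv (X 1) - 1) + X 1 * (expMv (-X 0) - 1)

namespace Aux

abbrev P2 := MvPolynomial (Fin 2) ℂ
abbrev S2 := MvPowerSeries (Fin 2) ℂ

def E (i j : ℕ) : Fin 2 →₀ ℕ := Finsupp.single 0 i + Finsupp.single 1 j

@[simp] lemma E_apply0 (i j : ℕ) : E i j 0 = i := by simp [E]
@[simp] lemma E_apply1 (i j : ℕ) : E i j 1 = j := by simp [E]
@[simp] lemma deg_E (i j : ℕ) : deg (E i j) = i + j := by simp [deg]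
lemma E_eta (d : Fin 2 →₀ ℕ) : E (d 0) (d 1) = d := by
  ext a
  fin_cases a <;> simp

lemma deg_add (a b : Fin 2 →₀ ℕ) : deg (a + b) = deg a + deg b := by
  simp [deg]; ring

@[simp] lemma deg_zero : deg 0 = 0 := by simp [deg]

lemma deg_eq_zero {d : Fin 2 →₀ ℕ} (h : deg d = 0) : d = 0 := by
  rw [← E_eta d]
  have h0 : d 0 = 0 := by simp [deg] at h; omega
  have h1 : d 1 = 0 := by simp [deg] at h; omega
  simp [h0, h1, E]

/-- homogeneous of total degree `n` (in the `deg` sense) -/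
def Hdeg (P : P2) (n : ℕ) : Prop := ∀ d, deg d ≠ n → MvPolynomial.coeff d P = 0

lemma Hdeg.zero (n : ℕ) : Hdeg 0 n := fun _ _ => by simp

lemma Hdeg.X (i : Fin 2) : Hdeg (MvPolynomial.X i) 1 := by
  intro d hd
  rw [MvPolynomial.coeff_X']
  split
  · exfalso; apply hd; subst_vars; fin_cases i <;> simp [deg]
  · rfl

lemma Hdeg.neg {P : P2} {n : ℕ} (h : Hdeg P n) : Hdeg (-P) n := fun d hd => by
  simp [h d hd]

lemma Hdeg.add {P Q : P2} {n : ℕ} (h : Hdeg P n) (h' : Hdeg Q n) : Hdeg (P + Q) n :=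
  fun d hd => by simp [MvPolynomial.coeff_add, h d hd, h' d hd]

lemma Hdeg.sub {P Q : P2} {n : ℕ} (h : Hdeg P n) (h' : Hdeg Q n) : Hdeg (P - Q) n := by
  simpa [sub_eq_add_neg] using h.add h'.neg

lemma Hdeg.one : Hdeg 1 0 := by
  intro d hd
  rw [MvPolynomial.coeff_one]
  split
  · exfalso; apply hd; subst_vars; simp
  · rfl

lemma Hdeg.mul {P Q : P2} {m n : ℕ} (h : Hdeg P m) (h' : Hdeg Q n) : Hdeg (P * Q) (m + n) := by
  intro d hd
  rw [MvPolynomial.coeff_mul]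
  apply Finset.sum_eq_zero
  rintro ⟨u, v⟩ huv
  rw [Finset.HasAntidiagonal.mem_antidiagonal] at huv
  by_cases hu : deg u = m
  · have hv : deg v ≠ n := by
      intro hv; apply hd; rw [← huv, deg_add, hu, hv]
    simp [h' v hv]
  · simp [h u hu]

lemma Hdeg.pow {P : P2} (h : Hdeg P 1) (k : ℕ) : Hdeg (P ^ k) k := by
  induction k with
  | zero => simpa using Hdeg.one
  | succ k ih =>
    have := ih.mul h
    rw [← pow_succ] at this
    exact this

lemma Hdeg.pow_mul {p q : P2} (hp : Hdeg p 1) (hq : Hdeg q 1) (i j : ℕ) :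
    Hdeg (p ^ i * q ^ j) (i + j) := (hp.pow i).mul (hq.pow j)


-- raw coefficient formula
lemma coeff_sub2_raw (p q : P2) (f : S2) (d : Fin 2 →₀ ℕ) :
    MvPowerSeries.coeff d (sub2 p q f) =
      ∑ ij ∈ Finset.range (deg d + 1) ×ˢ Finset.range (deg d + 1),
        MvPowerSeries.coeff (E ij.1 ij.2) f * MvPolynomial.coeff d (p ^ ij.1 * q ^ ij.2) :=
  rfl

/-- antidiagonal coefficient formula -/
lemma coeff_sub2 {p q : P2} (hp : Hdeg p 1) (hq : Hdeg q 1) (f : S2) (d : Fin 2 →₀ ℕ) :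
    MvPowerSeries.coeff d (sub2 p q f) =
      ∑ ij ∈ Finset.HasAntidiagonal.antidiagonal (deg d),
        MvPowerSeries.coeff (E ij.1 ij.2) f * MvPolynomial.coeff d (p ^ ij.1 * q ^ ij.2) := by
  rw [coeff_sub2_raw]
  symm
  apply Finset.sum_subset
  · rintro ⟨i, j⟩ hij
    rw [Finset.HasAntidiagonal.mem_antidiagonal] at hij
    simp only [Finset.mem_product, Finset.mem_range]
    omega
  · rintro ⟨i, j⟩ _ hij
    rw [Finset.HasAntidiagonal.mem_antidiagonal] at hij
    rw [Hdeg.pow_mul hp hq i j d (by omega), mul_zero]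

lemma coeff_sub2_congr {p q : P2} (hp : Hdeg p 1) (hq : Hdeg q 1) {f g : S2} (d : Fin 2 →₀ ℕ)
    (h : ∀ e, deg e = deg d → MvPowerSeries.coeff e f = MvPowerSeries.coeff e g) :
    MvPowerSeries.coeff d (sub2 p q f) = MvPowerSeries.coeff d (sub2 p q g) := by
  rw [coeff_sub2 hp hq, coeff_sub2 hp hq]
  apply Finset.sum_congr rfl
  rintro ⟨i, j⟩ hij
  rw [Finset.HasAntidiagonal.mem_antidiagonal] at hij
  rw [h (E i j) (by rw [deg_E, hij])]

lemma sub2_add (p q : P2) (f g : S2) : sub2 p q (f + g) = sub2 p q f + sub2 p q g := by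
  ext d
  rw [map_add, coeff_sub2_raw, coeff_sub2_raw, coeff_sub2_raw, ← Finset.sum_add_distrib]
  apply Finset.sum_congr rfl
  intro ij _
  rw [map_add, add_mul]

/-- substitution into a monomial -/
lemma sub2_monomial {p q : P2} (hp : Hdeg p 1) (hq : Hdeg q 1) (e : Fin 2 →₀ ℕ) (c : ℂ) :
    sub2 p q (MvPowerSeries.monomial e c) =
      ((MvPolynomial.C c * p ^ (e 0) * q ^ (e 1) : P2) : S2) := by
  ext d
  rw [coeff_sub2 hp hq]
  rw [Finset.sum_eq_single (e 0, e 1)]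
  · rw [MvPowerSeries.coeff_monomial, MvPolynomial.coeff_coe, mul_assoc,
      MvPolynomial.coeff_C_mul, E_eta, if_pos rfl]
  · rintro ⟨i, j⟩ hij hne
    rw [MvPowerSeries.coeff_monomial, if_neg, zero_mul]
    intro he
    apply hne
    rw [← he, E_apply0, E_apply1]
  · intro hne
    rw [Finset.HasAntidiagonal.mem_antidiagonal] at hne
    have : deg d ≠ e 0 + e 1 := fun h => hne (h ▸ rfl)
    rw [Hdeg.pow_mul hp hq _ _ d this, mul_zero]


lemma aeval_monomial_pair (p q : P2) (e : Fin 2 →₀ ℕ) (c : ℂ) :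
    MvPolynomial.aeval ![p, q] (MvPolynomial.monomial e c) =
      MvPolynomial.C c * p ^ (e 0) * q ^ (e 1) := by
  rw [MvPolynomial.aeval_monomial]
  rw [Finsupp.prod_fintype _ _ (fun i => pow_zero _)]
  rw [Fin.prod_univ_two]
  simp [MvPolynomial.algebraMap_eq, mul_assoc]

/-- substitution into (the coercion of) a polynomial is `aeval` -/
lemma sub2_coe {p q : P2} (hp : Hdeg p 1) (hq : Hdeg q 1) (P : P2) :
    sub2 p q ↑P = ((MvPolynomial.aeval ![p, q] P : P2) : S2) := by
  induction P using MvPolynomial.induction_on' with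
  | monomial e c =>
    rw [MvPolynomial.coe_monomial, sub2_monomial hp hq, aeval_monomial_pair]
  | add P Q ihP ihQ =>
    rw [MvPolynomial.coe_add, sub2_add, ihP, ihQ, map_add, MvPolynomial.coe_add]

lemma sub2_one {p q : P2} (hp : Hdeg p 1) (hq : Hdeg q 1) : sub2 p q 1 = 1 := by
  have h := sub2_coe hp hq 1
  rwa [MvPolynomial.coe_one, map_one, MvPolynomial.coe_one] at h

/-- truncation to total degree ≤ n, as a polynomial -/
def homogPart (n : ℕ) (f : S2) : P2 :=
  ∑ ij ∈ Finset.HasAntidiagonal.antidiagonal n,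
    MvPolynomial.monomial (E ij.1 ij.2) (MvPowerSeries.coeff (E ij.1 ij.2) f)


lemma coeff_homogPart (n : ℕ) (f : S2) (d : Fin 2 →₀ ℕ) :
    MvPolynomial.coeff d (homogPart n f) =
      if deg d = n then MvPowerSeries.coeff d f else 0 := by
  rw [homogPart, MvPolynomial.coeff_sum]
  by_cases hd : deg d = n
  · rw [if_pos hd]
    rw [Finset.sum_eq_single (d 0, d 1)]
    · rw [MvPolynomial.coeff_monomial, E_eta, if_pos rfl]
    · rintro ⟨i, j⟩ hij hne
      rw [MvPolynomial.coeff_monomial, if_neg]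
      intro he
      apply hne
      rw [← he, E_apply0, E_apply1]
    · intro hmem
      exfalso
      apply hmem
      rw [Finset.HasAntidiagonal.mem_antidiagonal]
      rw [← hd]; rfl
  · rw [if_neg hd]
    apply Finset.sum_eq_zero
    rintro ⟨i, j⟩ hij
    rw [Finset.HasAntidiagonal.mem_antidiagonal] at hij
    rw [MvPolynomial.coeff_monomial, if_neg]
    intro he
    apply hd
    rw [← he, deg_E, hij]

def truncTot (n : ℕ) (f : S2) : P2 := ∑ k ∈ Finset.range (n + 1), homogPart k f

lemma coeff_truncTot (n : ℕ) (f : S2) (d : Fin 2 →₀ ℕ) :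
    MvPolynomial.coeff d (truncTot n f) =
      if deg d ≤ n then MvPowerSeries.coeff d f else 0 := by
  rw [truncTot]
  simp only [MvPolynomial.coeff_sum, coeff_homogPart]
  rw [Finset.sum_ite_eq (Finset.range (n+1)) (deg d)]
  simp [Nat.lt_succ_iff]

lemma sub2_mul {p q : P2} (hp : Hdeg p 1) (hq : Hdeg q 1) (f g : S2) :
    sub2 p q (f * g) = sub2 p q f * sub2 p q g := by
  ext d
  set n := deg d with hn
  set Pf := truncTot n f with hPf
  set Pg := truncTot n g with hPg
  have key : ∀ (x : S2) (Px : P2), (∀ e, deg e ≤ n → MvPowerSeries.coeff e x = MvPolynomial.coeff e Px) →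
      ∀ e, deg e ≤ n → MvPowerSeries.coeff e (sub2 p q x) =
        MvPowerSeries.coeff e ((MvPolynomial.aeval ![p,q] Px : P2) : S2) := by
    intro x Px hx e he
    rw [← sub2_coe hp hq]
    apply coeff_sub2_congr hp hq
    intro e' he'
    rw [MvPolynomial.coeff_coe, hx e' (by omega)]
  have hf : ∀ e, deg e ≤ n → MvPowerSeries.coeff e f = MvPolynomial.coeff e Pf := by
    intro e he; rw [hPf, coeff_truncTot, if_pos he]
  have hg : ∀ e, deg e ≤ n → MvPowerSeries.coeff e g = MvPolynomial.coeff e Pg := by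
    intro e he; rw [hPg, coeff_truncTot, if_pos he]
  have hfg : ∀ e, deg e ≤ n → MvPowerSeries.coeff e (f * g) = MvPolynomial.coeff e (Pf * Pg) := by
    intro e he
    rw [MvPowerSeries.coeff_mul, MvPolynomial.coeff_mul]
    apply Finset.sum_congr rfl
    rintro ⟨u, v⟩ huv
    rw [Finset.HasAntidiagonal.mem_antidiagonal] at huv
    have hdu : deg u ≤ n := by have := deg_add u v; rw [huv] at this; omega
    have hdv : deg v ≤ n := by have := deg_add u v; rw [huv] at this; omega
    rw [hf u hdu, hg v hdv]
  rw [key (f * g) (Pf * Pg) hfg d le_rfl]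
  rw [map_mul, MvPolynomial.coe_mul]
  rw [MvPowerSeries.coeff_mul, MvPowerSeries.coeff_mul]
  apply Finset.sum_congr rfl
  rintro ⟨u, v⟩ huv
  rw [Finset.HasAntidiagonal.mem_antidiagonal] at huv
  have hdu : deg u ≤ n := by have := deg_add u v; rw [huv] at this; omega
  have hdv : deg v ≤ n := by have := deg_add u v; rw [huv] at this; omega
  rw [key f Pf hf u hdu, key g Pg hg v hdv]


lemma sub2_comp {p q p' q' : P2} (hp : Hdeg p 1) (hq : Hdeg q 1)
    (hp' : Hdeg p' 1) (hq' : Hdeg q' 1)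
    (hP : Hdeg (MvPolynomial.aeval ![p, q] p') 1) (hQ : Hdeg (MvPolynomial.aeval ![p, q] q') 1)
    (f : S2) :
    sub2 p q (sub2 p' q' f) =
      sub2 (MvPolynomial.aeval ![p, q] p') (MvPolynomial.aeval ![p, q] q') f := by
  ext d
  set n := deg d with hn
  set H := homogPart n f with hH
  have hfH : ∀ e, deg e = n → MvPowerSeries.coeff e f = MvPowerSeries.coeff e (↑H : S2) := by
    intro e he
    rw [MvPolynomial.coeff_coe, coeff_homogPart, if_pos he]
  calc MvPowerSeries.coeff d (sub2 p q (sub2 p' q' f))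
      = MvPowerSeries.coeff d (sub2 p q (sub2 p' q' ↑H)) := by
        apply coeff_sub2_congr hp hq
        intro e he
        exact coeff_sub2_congr hp' hq' e (fun e' he' => hfH e' (by rw [he', he]))
    _ = MvPowerSeries.coeff d ((MvPolynomial.aeval ![p,q] (MvPolynomial.aeval ![p',q'] H) : P2) : S2) := by
        rw [sub2_coe hp' hq', sub2_coe hp hq]
    _ = MvPowerSeries.coeff d ((MvPolynomial.aeval
          ![MvPolynomial.aeval ![p,q] p', MvPolynomial.aeval ![p,q] q'] H : P2) : S2) := by
        rw [← AlgHom.comp_apply, MvPolynomial.comp_aeval]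
        have harg : (fun i => MvPolynomial.aeval ![p,q] (![p',q'] i)) =
            ![MvPolynomial.aeval ![p,q] p', MvPolynomial.aeval ![p,q] q'] := by
          funext i; fin_cases i <;> simp
        rw [harg]
    _ = MvPowerSeries.coeff d (sub2 (MvPolynomial.aeval ![p,q] p') (MvPolynomial.aeval ![p,q] q') f) := by
        rw [← sub2_coe hP hQ]
        symm
        apply coeff_sub2_congr hP hQ
        intro e he
        exact hfH e he


/-- coefficients of the exponential of (the coercion of) a degree-1 homogeneous polynomial -/
lemma coeff_expMv {r : P2} (hr : Hdeg r 1) (d : Fin 2 →₀ ℕ) :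
    MvPowerSeries.coeff d (expMv ↑r) =
      (((deg d).factorial : ℂ))⁻¹ * MvPolynomial.coeff d (r ^ deg d) := by
  have : MvPowerSeries.coeff d (expMv ↑r) =
      ∑ k ∈ Finset.range (deg d + 1), MvPowerSeries.coeff d ((↑r : S2) ^ k) / (k.factorial : ℂ) := rfl
  rw [this]
  rw [Finset.sum_eq_single_of_mem (deg d) (Finset.self_mem_range_succ _)]
  · rw [← MvPolynomial.coe_pow, MvPolynomial.coeff_coe, div_eq_inv_mul]
  · intro k _ hk
    rw [← MvPolynomial.coe_pow, MvPolynomial.coeff_coe, Hdeg.pow hr k d (Ne.symm hk), zero_div]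

/-- substitution commutes with exponentials -/
lemma sub2_expMv {p q r : P2} (hp : Hdeg p 1) (hq : Hdeg q 1) (hr : Hdeg r 1)
    (hR : Hdeg (MvPolynomial.aeval ![p, q] r) 1) :
    sub2 p q (expMv ↑r) = expMv ↑(MvPolynomial.aeval ![p, q] r) := by
  ext d
  set n := deg d with hn
  calc MvPowerSeries.coeff d (sub2 p q (expMv ↑r))
      = MvPowerSeries.coeff d (sub2 p q ((MvPolynomial.C ((n.factorial : ℂ))⁻¹ * r ^ n : P2) : S2)) := by
        apply coeff_sub2_congr hp hq
        intro e he
        rw [coeff_expMv hr, MvPolynomial.coeff_coe, MvPolynomial.coeff_C_mul, he]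
    _ = MvPolynomial.coeff d (MvPolynomial.aeval ![p,q] (MvPolynomial.C ((n.factorial : ℂ))⁻¹ * r ^ n)) := by
        rw [sub2_coe hp hq, MvPolynomial.coeff_coe]
    _ = ((n.factorial : ℂ))⁻¹ * MvPolynomial.coeff d ((MvPolynomial.aeval ![p,q] r) ^ n) := by
        rw [map_mul, map_pow, MvPolynomial.aeval_C, MvPolynomial.algebraMap_eq,
          MvPolynomial.coeff_C_mul]
    _ = MvPowerSeries.coeff d (expMv ↑(MvPolynomial.aeval ![p,q] r)) := by
        rw [coeff_expMv hR]

/-- addition rule for the formal exponential -/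
lemma expMv_mul {a b : P2} (ha : Hdeg a 1) (hb : Hdeg b 1) :
    expMv ↑a * expMv ↑b = expMv ↑(a + b) := by
  have hab : Hdeg (a + b) 1 := by
    intro e he
    rw [MvPolynomial.coeff_add, ha e he, hb e he, add_zero]
  ext d
  set n := deg d with hn
  have key : ∀ uv ∈ Finset.HasAntidiagonal.antidiagonal d, ∀ j ∈ Finset.range (n+1),
      (if deg uv.1 = j then ((j.factorial : ℂ))⁻¹ * (((n - j).factorial : ℂ))⁻¹ *
        (MvPolynomial.coeff uv.1 (a ^ j) * MvPolynomial.coeff uv.2 (b ^ (n - j))) else 0) =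
      (if deg uv.1 = j then ((j.factorial : ℂ))⁻¹ * (((n - j).factorial : ℂ))⁻¹ *
        (MvPolynomial.coeff uv.1 (a ^ j) * MvPolynomial.coeff uv.2 (b ^ (n - j))) else 0) :=
    fun _ _ _ _ => rfl
  have lhs_eq : MvPowerSeries.coeff d (expMv ↑a * expMv ↑b) =
      ∑ uv ∈ Finset.HasAntidiagonal.antidiagonal d, ∑ j ∈ Finset.range (n+1),
        (if deg uv.1 = j then ((j.factorial : ℂ))⁻¹ * (((n - j).factorial : ℂ))⁻¹ *
          (MvPolynomial.coeff uv.1 (a ^ j) * MvPolynomial.coeff uv.2 (b ^ (n - j))) else 0) := by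
    rw [MvPowerSeries.coeff_mul]
    apply Finset.sum_congr rfl
    rintro ⟨u, v⟩ huv
    rw [Finset.HasAntidiagonal.mem_antidiagonal] at huv
    have hdeg : deg u + deg v = n := by rw [← deg_add, huv]
    rw [Finset.sum_ite_eq (Finset.range (n+1)) (deg u)]
    rw [if_pos (by rw [Finset.mem_range]; omega)]
    rw [coeff_expMv ha, coeff_expMv hb]
    have : n - deg u = deg v := by omega
    rw [this]
    ring
  have rhs_eq : MvPowerSeries.coeff d (expMv ↑(a + b)) =
      ∑ j ∈ Finset.range (n+1), ∑ uv ∈ Finset.HasAntidiagonal.antidiagonal d,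
        (if deg uv.1 = j then ((j.factorial : ℂ))⁻¹ * (((n - j).factorial : ℂ))⁻¹ *
          (MvPolynomial.coeff uv.1 (a ^ j) * MvPolynomial.coeff uv.2 (b ^ (n - j))) else 0) := by
    rw [coeff_expMv hab, add_pow, MvPolynomial.coeff_sum, Finset.mul_sum]
    apply Finset.sum_congr rfl
    intro j hj
    rw [Finset.mem_range, Nat.lt_succ_iff] at hj
    have hcast : ((n.choose j : ℕ) : P2) = MvPolynomial.C ((n.choose j : ℂ)) := by
      rw [map_natCast (MvPolynomial.C : ℂ →+* P2)]
    rw [hcast, mul_comm (a ^ j * b ^ (n - j)) _, MvPolynomial.coeff_C_mul,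
      MvPolynomial.coeff_mul, Finset.mul_sum, Finset.mul_sum]
    apply Finset.sum_congr rfl
    rintro ⟨u, v⟩ huv
    rw [Finset.HasAntidiagonal.mem_antidiagonal] at huv
    by_cases hu : deg u = j
    · rw [if_pos hu]
      have h2 : (n.choose j : ℂ) * (j.factorial : ℂ) * ((n - j).factorial : ℂ)
          = (n.factorial : ℂ) := by
        exact_mod_cast congrArg (Nat.cast : ℕ → ℂ) (Nat.choose_mul_factorial_mul_factorial hj)
      have hj1 : (j.factorial : ℂ) ≠ 0 := Nat.cast_ne_zero.2 (Nat.factorial_ne_zero _)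
      have hj2 : (((n - j).factorial : ℕ) : ℂ) ≠ 0 := Nat.cast_ne_zero.2 (Nat.factorial_ne_zero _)
      have hj3 : ((n.factorial : ℕ) : ℂ) ≠ 0 := Nat.cast_ne_zero.2 (Nat.factorial_ne_zero _)
      have hfact : ((n.factorial : ℂ))⁻¹ * (n.choose j : ℂ) =
          ((j.factorial : ℂ))⁻¹ * (((n - j).factorial : ℂ))⁻¹ := by
        field_simp
        linear_combination h2
      linear_combination (MvPolynomial.coeff u (a ^ j) * MvPolynomial.coeff v (b ^ (n - j))) * hfact
    · rw [if_neg hu, Hdeg.pow ha j u hu, zero_mul, mul_zero, mul_zero]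
  rw [lhs_eq, rhs_eq, Finset.sum_comm]


lemma coe_neg (P : P2) : ((-P : P2) : S2) = -(P : S2) := by
  ext d
  simp [MvPolynomial.coeff_coe]

lemma coe_sub (P Q : P2) : ((P - Q : P2) : S2) = (P : S2) - (Q : S2) := by
  ext d
  simp [MvPolynomial.coeff_coe]

@[simp] lemma E_zero : E 0 0 = 0 := by simp [E]

lemma coeff_zero_sub2 (p q : P2) (f : S2) :
    MvPowerSeries.coeff 0 (sub2 p q f) = MvPowerSeries.coeff 0 f := by
  rw [coeff_sub2_raw]
  have h0 : deg (0 : Fin 2 →₀ ℕ) = 0 := by simp [deg]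
  rw [h0]
  simp [Finset.range_one, MvPolynomial.coeff_zero_one]

/-- substituting `(-p, -q)` into an even series -/
lemma sub2_neg_neg {p q : P2} {f : S2}
    (h : ∀ i j : ℕ, ¬ Even (i + j) → MvPowerSeries.coeff (E i j) f = 0) :
    sub2 (-p) (-q) f = sub2 p q f := by
  ext d
  rw [coeff_sub2_raw, coeff_sub2_raw]
  apply Finset.sum_congr rfl
  rintro ⟨i, j⟩ _
  by_cases hij : Even (i + j)
  · have key : (-p) ^ i * (-q) ^ j = (-1 : P2) ^ (i + j) * (p ^ i * q ^ j) := by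
      rw [neg_pow, neg_pow, pow_add]; ring
    rw [key, hij.neg_one_pow, one_mul]
  · rw [h i j hij, zero_mul, zero_mul]

/-- sinh(x)/x series placed into the first variable -/
def Sser : S2 := fun d =>
  if d 1 = 0 ∧ Even (d 0) then (((d 0 + 1).factorial : ℂ))⁻¹ else 0

lemma coeff_Sser (i j : ℕ) :
    MvPowerSeries.coeff (E i j) Sser =
      if j = 0 ∧ Even i then (((i + 1).factorial : ℂ))⁻¹ else 0 := by
  have : MvPowerSeries.coeff (E i j) Sser =
      (if (E i j) 1 = 0 ∧ Even ((E i j) 0) then ((((E i j) 0 + 1).factorial : ℂ))⁻¹ else 0) := rfl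
  rw [this, E_apply0, E_apply1]

lemma Sser_even (i j : ℕ) (h : ¬ Even (i + j)) : MvPowerSeries.coeff (E i j) Sser = 0 := by
  rw [coeff_Sser]
  rcases Nat.eq_zero_or_pos j with hj | hj
  · subst hj
    rw [if_neg]
    rintro ⟨-, hi⟩
    exact h (by simpa using hi)
  · rw [if_neg]; rintro ⟨hj0, -⟩; omega

lemma coeff_sub2_Sser {p : P2} (hp : Hdeg p 1) (d : Fin 2 →₀ ℕ) :
    MvPowerSeries.coeff d (sub2 p 0 Sser) =
      if Even (deg d) then (((deg d + 1).factorial : ℂ))⁻¹ * MvPolynomial.coeff d (p ^ deg d)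
      else 0 := by
  rw [coeff_sub2 hp (Hdeg.zero 1)]
  rw [Finset.sum_eq_single (deg d, 0)]
  · rw [coeff_Sser]
    by_cases he : Even (deg d)
    · rw [if_pos ⟨rfl, he⟩, if_pos he, pow_zero, mul_one]
    · rw [if_neg (fun hc => he hc.2), if_neg he, zero_mul]
  · rintro ⟨i, j⟩ hij hne
    rw [Finset.HasAntidiagonal.mem_antidiagonal] at hij
    have hj : j ≠ 0 := by
      intro hj0
      apply hne
      subst hj0
      simp at hij ⊢
      omega
    rw [coeff_Sser, if_neg (fun hc => hj hc.1), zero_mul]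
  · intro hmem
    exfalso
    apply hmem
    rw [Finset.HasAntidiagonal.mem_antidiagonal]
    simp

/-- the fundamental sinh identity: `e^p - e^{-p} = 2 p S(p)` -/
lemma sinh_eq {p : P2} (hp : Hdeg p 1) :
    expMv ↑p - expMv ↑(-p) = 2 * ((p : S2) * sub2 p 0 Sser) := by
  ext d
  have hneg : MvPolynomial.coeff d ((-p) ^ deg d) = (-1 : ℂ) ^ deg d * MvPolynomial.coeff d (p ^ deg d) := by
    have h1 : (-p) ^ deg d = MvPolynomial.C ((-1 : ℂ) ^ deg d) * p ^ deg d := by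
      rw [neg_pow, map_pow]
      rw [show MvPolynomial.C (-1 : ℂ) = (-1 : P2) by simp]
    rw [h1, MvPolynomial.coeff_C_mul]
  rw [map_sub, coeff_expMv hp, coeff_expMv (Hdeg.neg hp), hneg]
  have h2 : MvPowerSeries.coeff d (2 * ((p : S2) * sub2 p 0 Sser)) =
      2 * MvPowerSeries.coeff d ((p : S2) * sub2 p 0 Sser) := by
    rw [two_mul, two_mul, map_add]
  rw [h2, MvPowerSeries.coeff_mul]
  by_cases hn0 : deg d = 0
  · have : ∀ uv ∈ Finset.HasAntidiagonal.antidiagonal d,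
        MvPowerSeries.coeff uv.1 (↑p : S2) * MvPowerSeries.coeff uv.2 (sub2 p 0 Sser) = 0 := by
      rintro ⟨u, v⟩ huv
      rw [Finset.HasAntidiagonal.mem_antidiagonal] at huv
      have hdu : deg u = 0 := by
        have := deg_add u v; rw [huv] at this; omega
      rw [MvPolynomial.coeff_coe, hp u (by omega), zero_mul]
    rw [Finset.sum_eq_zero this, hn0]
    norm_num
  · by_cases he : Even (deg d - 1)
    · have hodd : Odd (deg d) := by
        rcases Nat.even_or_odd (deg d) with h | h
        · exfalso
          rcases h with ⟨k, hk⟩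
          rcases he with ⟨m, hm⟩
          omega
        · exact h
      have hterm : ∀ uv ∈ Finset.HasAntidiagonal.antidiagonal d,
          MvPowerSeries.coeff uv.1 (↑p : S2) * MvPowerSeries.coeff uv.2 (sub2 p 0 Sser) =
          (((deg d).factorial : ℂ))⁻¹ * (MvPolynomial.coeff uv.1 p * MvPolynomial.coeff uv.2 (p ^ (deg d - 1))) := by
        rintro ⟨u, v⟩ huv
        rw [Finset.HasAntidiagonal.mem_antidiagonal] at huv
        rw [MvPolynomial.coeff_coe]
        by_cases hu : MvPolynomial.coeff u p = 0
        · rw [hu, zero_mul, zero_mul, mul_zero]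
        · have hdu : deg u = 1 := by
            by_contra hd
            exact hu (hp u hd)
          have hdv : deg v = deg d - 1 := by
            have := deg_add u v; rw [huv] at this; omega
          rw [coeff_sub2_Sser hp v, hdv, if_pos he]
          have hsucc : deg d - 1 + 1 = deg d := by omega
          rw [hsucc]
          ring
      rw [Finset.sum_congr rfl hterm, ← Finset.mul_sum]
      have hsum : ∑ uv ∈ Finset.HasAntidiagonal.antidiagonal d,
          MvPolynomial.coeff uv.1 p * MvPolynomial.coeff uv.2 (p ^ (deg d - 1)) =
          MvPolynomial.coeff d (p ^ deg d) := by
        rw [← MvPolynomial.coeff_mul]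
        congr 1
        rw [mul_comm, ← pow_succ]
        congr 1
        omega
      rw [hsum, hodd.neg_one_pow]
      ring
    · have heven : Even (deg d) := by
        rcases Nat.even_or_odd (deg d) with h | h
        · exact h
        · exfalso
          rcases h with ⟨k, hk⟩
          exact he ⟨k, by omega⟩
      have hterm : ∀ uv ∈ Finset.HasAntidiagonal.antidiagonal d,
          MvPowerSeries.coeff uv.1 (↑p : S2) * MvPowerSeries.coeff uv.2 (sub2 p 0 Sser) = 0 := by
        rintro ⟨u, v⟩ huv
        rw [Finset.HasAntidiagonal.mem_antidiagonal] at huv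
        rw [MvPolynomial.coeff_coe]
        by_cases hu : MvPolynomial.coeff u p = 0
        · rw [hu, zero_mul]
        · have hdu : deg u = 1 := by
            by_contra hd
            exact hu (hp u hd)
          have hdv : deg v = deg d - 1 := by
            have := deg_add u v; rw [huv] at this; omega
          rw [coeff_sub2_Sser hp v, hdv, if_neg he, mul_zero]
      rw [Finset.sum_eq_zero hterm, heven.neg_one_pow]
      ring

lemma sub2_neg (p q : P2) (f : S2) : sub2 p q (-f) = - sub2 p q f := by
  ext d
  rw [map_neg, coeff_sub2_raw, coeff_sub2_raw, ← Finset.sum_neg_distrib]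
  apply Finset.sum_congr rfl
  intro ij _
  rw [map_neg, neg_mul]

lemma sub2_sub (p q : P2) (f g : S2) : sub2 p q (f - g) = sub2 p q f - sub2 p q g := by
  rw [sub_eq_add_neg, sub2_add, sub2_neg, sub_eq_add_neg]

lemma sub2_comp' {p q p' q' P Q : P2} (hp : Hdeg p 1) (hq : Hdeg q 1)
    (hp' : Hdeg p' 1) (hq' : Hdeg q' 1)
    (hPe : MvPolynomial.aeval ![p, q] p' = P) (hQe : MvPolynomial.aeval ![p, q] q' = Q)
    (hP : Hdeg P 1) (hQ : Hdeg Q 1) (f : S2) :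
    sub2 p q (sub2 p' q' f) = sub2 P Q f := by
  subst hPe hQe
  exact sub2_comp hp hq hp' hq' hP hQ f

lemma sub2_coe' {p q P Q : P2} (hp : Hdeg p 1) (hq : Hdeg q 1)
    (hPe : MvPolynomial.aeval ![p, q] P = Q) :
    sub2 p q ↑P = (Q : S2) := by
  subst hPe; exact sub2_coe hp hq P

lemma sub2_expMv' {p q r R : P2} (hp : Hdeg p 1) (hq : Hdeg q 1) (hr : Hdeg r 1)
    (hRe : MvPolynomial.aeval ![p, q] r = R) (hR : Hdeg R 1) :
    sub2 p q (expMv ↑r) = expMv ↑R := by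
  subst hRe; exact sub2_expMv hp hq hr hR

lemma sub2_neg_zero {p : P2} {f : S2}
    (h : ∀ i j : ℕ, ¬ Even (i + j) → MvPowerSeries.coeff (E i j) f = 0) :
    sub2 (-p) 0 f = sub2 p 0 f := by
  have h2 := sub2_neg_neg (p := p) (q := (0 : P2)) h
  rwa [neg_zero] at h2

lemma two_ne_zero' : (2 : S2) ≠ 0 := by
  intro hcon
  have h := congrArg (MvPowerSeries.constantCoeff) hcon
  rw [map_ofNat, map_zero] at h
  norm_num at h

lemma X_ne_zero' (i : Fin 2) : (MvPowerSeries.X i : S2) ≠ 0 := by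
  intro hcon
  have h := congrArg (MvPowerSeries.coeff (Finsupp.single i 1)) hcon
  rw [MvPowerSeries.coeff_X, if_pos rfl, map_zero] at h
  norm_num at h

lemma X_add_X_ne_zero : (MvPowerSeries.X 0 + MvPowerSeries.X 1 : S2) ≠ 0 := by
  intro hcon
  have h := congrArg (MvPowerSeries.coeff (Finsupp.single 0 1)) hcon
  rw [map_add, MvPowerSeries.coeff_X, MvPowerSeries.coeff_X, if_pos rfl, if_neg, map_zero] at h
  · norm_num at h
  · intro hs
    have := congrFun (congrArg (fun g : Fin 2 →₀ ℕ => (g : Fin 2 → ℕ)) hs) 0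
    simp at this

lemma constantCoeff_Sser : MvPowerSeries.constantCoeff Sser = 1 := by
  have h : MvPowerSeries.coeff 0 Sser =
      (if (0 : Fin 2 →₀ ℕ) 1 = 0 ∧ Even ((0 : Fin 2 →₀ ℕ) 0) then
        (((((0 : Fin 2 →₀ ℕ) 0) + 1).factorial : ℂ))⁻¹ else 0) := rfl
  rw [← MvPowerSeries.coeff_zero_eq_constantCoeff_apply, h]
  norm_num


end Aux

open Aux

/-- let `F` be symmetric, even, with `F(λ,0) = 1`. Then
`(λ+μ)·F = λe^{μ}·F(μ,−λ−μ) + μe^{−λ}·F(λ,−λ−μ)` holds iff there is `h` with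
`h(λ,μ) = h(μ,λ) = h(−λ,−μ) = h(λ,−λ−μ)` and `(e^{λ} − e^{−λ})·h(λ,0) = 2λ`,
such that `2(λ+μ)·F = (e^{λ+μ} − e^{−λ−μ})·h`. -/
theorem even_eq_iff_exists_h (F : MvPowerSeries (Fin 2) ℂ)
    (hsym : swapS F = F) (heven : negS F = F)
    (hF0 : sub2 (MvPolynomial.X 0) 0 F = 1) :
    (((X 0 : MvPowerSeries (Fin 2) ℂ) + X 1) * F
        = X 0 * expMv (X 1) * s₁ F + X 1 * expMv (-X 0) * s₂ F)
      ↔ ∃ h : MvPowerSeries (Fin 2) ℂ,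
          swapS h = h ∧ negS h = h ∧ s₂ h = h ∧
          (expMv (X 0) - expMv (-X 0)) * sub2 (MvPolynomial.X 0) 0 h = 2 * X 0 ∧
          2 * ((X 0 : MvPowerSeries (Fin 2) ℂ) + X 1) * F
            = (expMv (X 0 + X 1) - expMv (-X 0 - X 1)) * h := by
  classical
  replace hsym : sub2 (MvPolynomial.X (1 : Fin 2)) (MvPolynomial.X (0 : Fin 2)) F = F := hsym
  replace heven : sub2 (-MvPolynomial.X (0 : Fin 2)) (-MvPolynomial.X (1 : Fin 2)) F = F := heven
  -- homogeneity facts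
  have hX0 : Hdeg (MvPolynomial.X (0 : Fin 2)) 1 := Hdeg.X 0
  have hX1 : Hdeg (MvPolynomial.X (1 : Fin 2)) 1 := Hdeg.X 1
  have hnX0 : Hdeg (-MvPolynomial.X (0 : Fin 2)) 1 := hX0.neg
  have hnX1 : Hdeg (-MvPolynomial.X (1 : Fin 2)) 1 := hX1.neg
  have hs : Hdeg (-MvPolynomial.X (0 : Fin 2) - MvPolynomial.X (1 : Fin 2)) 1 := hnX0.sub hX1
  have hplus : Hdeg (MvPolynomial.X (0 : Fin 2) + MvPolynomial.X (1 : Fin 2)) 1 := hX0.add hX1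
  have hz : Hdeg (0 : P2) 1 := Hdeg.zero 1
  -- coercion normalizations
  have cX0 : ((MvPolynomial.X (0 : Fin 2) : P2) : S2) = X 0 := MvPolynomial.coe_X 0
  have cX1 : ((MvPolynomial.X (1 : Fin 2) : P2) : S2) = X 1 := MvPolynomial.coe_X 1
  have cnX0 : ((-MvPolynomial.X (0 : Fin 2) : P2) : S2) = -X 0 := by rw [coe_neg, cX0]
  have cnX1 : ((-MvPolynomial.X (1 : Fin 2) : P2) : S2) = -X 1 := by rw [coe_neg, cX1]
  have cadd : ((MvPolynomial.X (0 : Fin 2) + MvPolynomial.X (1 : Fin 2) : P2) : S2) = X 0 + X 1 := by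
    rw [MvPolynomial.coe_add, cX0, cX1]
  have cs : ((-MvPolynomial.X (0 : Fin 2) - MvPolynomial.X (1 : Fin 2) : P2) : S2) = -X 0 - X 1 := by
    rw [coe_sub, cnX0, cX1]
  -- the unit u = S(lambda+mu) and its inverse v
  have hcu : MvPowerSeries.constantCoeff (sub2 (MvPolynomial.X (0 : Fin 2) + MvPolynomial.X (1 : Fin 2)) 0 Sser) = 1 := by
    rw [← MvPowerSeries.coeff_zero_eq_constantCoeff_apply, coeff_zero_sub2,
      MvPowerSeries.coeff_zero_eq_constantCoeff_apply, constantCoeff_Sser]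
  set u : S2 := sub2 (MvPolynomial.X (0 : Fin 2) + MvPolynomial.X (1 : Fin 2)) 0 Sser with hu_def
  set v : S2 := MvPowerSeries.invOfUnit u 1 with hv_def
  have huv : u * v = 1 := MvPowerSeries.mul_invOfUnit u 1 (by rw [hcu, Units.val_one])
  set uu : S2 := sub2 (MvPolynomial.X (1 : Fin 2)) 0 Sser with huu_def
  -- exp multiplication rules, in canonical (series) form
  have m1 : expMv (X 1) * expMv (X 0) = expMv (X 0 + X 1) := by
    have hm := expMv_mul hX1 hX0
    rw [show (MvPolynomial.X (1 : Fin 2) + MvPolynomial.X (0 : Fin 2) : P2) = MvPolynomial.X (0 : Fin 2) + MvPolynomial.X (1 : Fin 2) from add_comm _ _] at hm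
    rw [cX0, cX1, cadd] at hm
    exact hm
  have m2 : expMv (-X 1) * expMv (-X 0) = expMv (-X 0 - X 1) := by
    have hm := expMv_mul hnX1 hnX0
    rw [show (-MvPolynomial.X (1 : Fin 2) + -MvPolynomial.X (0 : Fin 2) : P2) = -MvPolynomial.X (0 : Fin 2) - MvPolynomial.X (1 : Fin 2) by ring] at hm
    rw [cnX0, cnX1, cs] at hm
    exact hm
  -- sinh identities, canonical form
  have sh01 : expMv (X 0 + X 1) - expMv (-X 0 - X 1) = 2 * ((X 0 + X 1) * u) := by
    have hm := sinh_eq hplus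
    rw [show (-(MvPolynomial.X (0 : Fin 2) + MvPolynomial.X (1 : Fin 2)) : P2) = -MvPolynomial.X (0 : Fin 2) - MvPolynomial.X (1 : Fin 2) by ring] at hm
    rw [cadd, cs] at hm
    exact hm
  have sh1 : expMv (X 1) - expMv (-X 1) = 2 * (X 1 * uu) := by
    have hm := sinh_eq hX1
    rw [cX1, cnX1] at hm
    exact hm
  have sh0 : expMv (X 0) - expMv (-X 0) = 2 * (X 0 * sub2 (MvPolynomial.X (0 : Fin 2)) 0 Sser) := by
    have hm := sinh_eq hX0
    rw [cX0, cnX0] at hm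
    exact hm
  -- substitution images of u
  have hswapu : sub2 (MvPolynomial.X (1 : Fin 2)) (MvPolynomial.X (0 : Fin 2)) u = u := by
    rw [hu_def]
    exact sub2_comp' hX1 hX0 hplus hz (by simp only [map_add, map_sub, map_neg, map_zero, MvPolynomial.aeval_X, Matrix.cons_val_zero, Matrix.cons_val_one, Matrix.head_cons]; try ring) (by simp only [map_add, map_sub, map_neg, map_zero, MvPolynomial.aeval_X, Matrix.cons_val_zero, Matrix.cons_val_one, Matrix.head_cons]; try ring) hplus hz Sser
  have hnegu : sub2 (-MvPolynomial.X (0 : Fin 2)) (-MvPolynomial.X (1 : Fin 2)) u = u := by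
    rw [hu_def]
    have h1 : sub2 (-MvPolynomial.X (0 : Fin 2)) (-MvPolynomial.X (1 : Fin 2)) (sub2 (MvPolynomial.X (0 : Fin 2) + MvPolynomial.X (1 : Fin 2)) 0 Sser)
        = sub2 (-(MvPolynomial.X (0 : Fin 2) + MvPolynomial.X (1 : Fin 2))) 0 Sser :=
      sub2_comp' hnX0 hnX1 hplus hz (by simp only [map_add, map_sub, map_neg, map_zero, MvPolynomial.aeval_X, Matrix.cons_val_zero, Matrix.cons_val_one, Matrix.head_cons]; try ring) (by simp only [map_add, map_sub, map_neg, map_zero, MvPolynomial.aeval_X, Matrix.cons_val_zero, Matrix.cons_val_one, Matrix.head_cons]; try ring) hplus.neg hz Sser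
    rw [h1, sub2_neg_zero Sser_even]
  have hs2u : sub2 (MvPolynomial.X (0 : Fin 2)) (-MvPolynomial.X (0 : Fin 2) - MvPolynomial.X (1 : Fin 2)) u = uu := by
    rw [hu_def, huu_def]
    have h1 : sub2 (MvPolynomial.X (0 : Fin 2)) (-MvPolynomial.X (0 : Fin 2) - MvPolynomial.X (1 : Fin 2)) (sub2 (MvPolynomial.X (0 : Fin 2) + MvPolynomial.X (1 : Fin 2)) 0 Sser)
        = sub2 (-MvPolynomial.X (1 : Fin 2)) 0 Sser :=
      sub2_comp' hX0 hs hplus hz (by simp only [map_add, map_sub, map_neg, map_zero, MvPolynomial.aeval_X, Matrix.cons_val_zero, Matrix.cons_val_one, Matrix.head_cons]; try ring) (by simp only [map_add, map_sub, map_neg, map_zero, MvPolynomial.aeval_X, Matrix.cons_val_zero, Matrix.cons_val_one, Matrix.head_cons]; try ring) hnX1 hz Sser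
    rw [h1, sub2_neg_zero Sser_even]
  have hlamu : sub2 (MvPolynomial.X (0 : Fin 2)) 0 u = sub2 (MvPolynomial.X (0 : Fin 2)) 0 Sser := by
    rw [hu_def]
    exact sub2_comp' hX0 hz hplus hz (by simp only [map_add, map_sub, map_neg, map_zero, MvPolynomial.aeval_X, Matrix.cons_val_zero, Matrix.cons_val_one, Matrix.head_cons]; try ring) (by simp only [map_add, map_sub, map_neg, map_zero, MvPolynomial.aeval_X, Matrix.cons_val_zero, Matrix.cons_val_one, Matrix.head_cons]; try ring) hX0 hz Sser
  -- inverse propagation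
  have hswapv : sub2 (MvPolynomial.X (1 : Fin 2)) (MvPolynomial.X (0 : Fin 2)) v = v := by
    have h1 : u * sub2 (MvPolynomial.X (1 : Fin 2)) (MvPolynomial.X (0 : Fin 2)) v = 1 := by
      have h2 := congrArg (sub2 (MvPolynomial.X (1 : Fin 2)) (MvPolynomial.X (0 : Fin 2))) huv
      rwa [sub2_mul hX1 hX0, sub2_one hX1 hX0, hswapu] at h2
    calc sub2 (MvPolynomial.X (1 : Fin 2)) (MvPolynomial.X (0 : Fin 2)) v = sub2 (MvPolynomial.X (1 : Fin 2)) (MvPolynomial.X (0 : Fin 2)) v * (u * v) := by rw [huv, mul_one]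
      _ = (u * sub2 (MvPolynomial.X (1 : Fin 2)) (MvPolynomial.X (0 : Fin 2)) v) * v := by ring
      _ = v := by rw [h1, one_mul]
  have hnegv : sub2 (-MvPolynomial.X (0 : Fin 2)) (-MvPolynomial.X (1 : Fin 2)) v = v := by
    have h1 : u * sub2 (-MvPolynomial.X (0 : Fin 2)) (-MvPolynomial.X (1 : Fin 2)) v = 1 := by
      have h2 := congrArg (sub2 (-MvPolynomial.X (0 : Fin 2)) (-MvPolynomial.X (1 : Fin 2))) huv
      rwa [sub2_mul hnX0 hnX1, sub2_one hnX0 hnX1, hnegu] at h2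
    calc sub2 (-MvPolynomial.X (0 : Fin 2)) (-MvPolynomial.X (1 : Fin 2)) v = sub2 (-MvPolynomial.X (0 : Fin 2)) (-MvPolynomial.X (1 : Fin 2)) v * (u * v) := by rw [huv, mul_one]
      _ = (u * sub2 (-MvPolynomial.X (0 : Fin 2)) (-MvPolynomial.X (1 : Fin 2)) v) * v := by ring
      _ = v := by rw [h1, one_mul]
  have hs2v : uu * sub2 (MvPolynomial.X (0 : Fin 2)) (-MvPolynomial.X (0 : Fin 2) - MvPolynomial.X (1 : Fin 2)) v = 1 := by
    have h2 := congrArg (sub2 (MvPolynomial.X (0 : Fin 2)) (-MvPolynomial.X (0 : Fin 2) - MvPolynomial.X (1 : Fin 2))) huv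
    rwa [sub2_mul hX0 hs, sub2_one hX0 hs, hs2u] at h2
  have hlamv : sub2 (MvPolynomial.X (0 : Fin 2)) 0 Sser * sub2 (MvPolynomial.X (0 : Fin 2)) 0 v = 1 := by
    have h2 := congrArg (sub2 (MvPolynomial.X (0 : Fin 2)) 0) huv
    rwa [sub2_mul hX0 hz, sub2_one hX0 hz, hlamu] at h2
  simp only [s₁, s₂, swapS, negS]
  constructor
  · intro hEq
    -- apply the substitution (x,y) -> (-x,-y) to hEq
    have hEqc := hEq
    rw [← cadd, ← cnX0, ← cX0, ← cX1] at hEqc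
    have h0 := congrArg (sub2 (-MvPolynomial.X (0 : Fin 2)) (-MvPolynomial.X (1 : Fin 2))) hEqc
    simp only [sub2_add (-MvPolynomial.X (0 : Fin 2)) (-MvPolynomial.X (1 : Fin 2)), sub2_mul hnX0 hnX1] at h0
    rw [sub2_coe' hnX0 hnX1 (Q := -MvPolynomial.X (0 : Fin 2) - MvPolynomial.X (1 : Fin 2)) (by simp only [map_add, map_sub, map_neg, map_zero, MvPolynomial.aeval_X, Matrix.cons_val_zero, Matrix.cons_val_one, Matrix.head_cons]; try ring),
        sub2_coe' hnX0 hnX1 (Q := -MvPolynomial.X (0 : Fin 2)) (by simp only [map_add, map_sub, map_neg, map_zero, MvPolynomial.aeval_X, Matrix.cons_val_zero, Matrix.cons_val_one, Matrix.head_cons]; try ring),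
        sub2_coe' hnX0 hnX1 (Q := -MvPolynomial.X (1 : Fin 2)) (by simp only [map_add, map_sub, map_neg, map_zero, MvPolynomial.aeval_X, Matrix.cons_val_zero, Matrix.cons_val_one, Matrix.head_cons]; try ring),
        sub2_expMv' hnX0 hnX1 hX1 (R := -MvPolynomial.X (1 : Fin 2)) (by simp only [map_add, map_sub, map_neg, map_zero, MvPolynomial.aeval_X, Matrix.cons_val_zero, Matrix.cons_val_one, Matrix.head_cons]; try ring) hnX1,
        sub2_expMv' hnX0 hnX1 hnX0 (R := MvPolynomial.X (0 : Fin 2)) (by simp only [map_add, map_sub, map_neg, map_zero, MvPolynomial.aeval_X, Matrix.cons_val_zero, Matrix.cons_val_one, Matrix.head_cons]; try ring) hX0,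
        heven,
        sub2_comp' hnX0 hnX1 hX1 hs (Q := MvPolynomial.X (0 : Fin 2) + MvPolynomial.X (1 : Fin 2)) (by simp only [map_add, map_sub, map_neg, map_zero, MvPolynomial.aeval_X, Matrix.cons_val_zero, Matrix.cons_val_one, Matrix.head_cons]; try ring) (by simp only [map_add, map_sub, map_neg, map_zero, MvPolynomial.aeval_X, Matrix.cons_val_zero, Matrix.cons_val_one, Matrix.head_cons]; try ring) hnX1 hplus F,
        sub2_comp' hnX0 hnX1 hX0 hs (Q := MvPolynomial.X (0 : Fin 2) + MvPolynomial.X (1 : Fin 2)) (by simp only [map_add, map_sub, map_neg, map_zero, MvPolynomial.aeval_X, Matrix.cons_val_zero, Matrix.cons_val_one, Matrix.head_cons]; try ring) (by simp only [map_add, map_sub, map_neg, map_zero, MvPolynomial.aeval_X, Matrix.cons_val_zero, Matrix.cons_val_one, Matrix.head_cons]; try ring) hnX0 hplus F] at h0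
    -- identify the twisted substitutions with s1 F, s2 F using evenness of F
    have hnegs1 : sub2 (-MvPolynomial.X (1 : Fin 2)) (MvPolynomial.X (0 : Fin 2) + MvPolynomial.X (1 : Fin 2)) F = sub2 (MvPolynomial.X (1 : Fin 2)) (-MvPolynomial.X (0 : Fin 2) - MvPolynomial.X (1 : Fin 2)) F := by
      conv_rhs => rw [← heven]
      exact (sub2_comp' hX1 hs hnX0 hnX1 (by simp only [map_add, map_sub, map_neg, map_zero, MvPolynomial.aeval_X, Matrix.cons_val_zero, Matrix.cons_val_one, Matrix.head_cons]; try ring) (by simp only [map_add, map_sub, map_neg, map_zero, MvPolynomial.aeval_X, Matrix.cons_val_zero, Matrix.cons_val_one, Matrix.head_cons]; try ring) hnX1 hplus F).symm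
    have hnegs2 : sub2 (-MvPolynomial.X (0 : Fin 2)) (MvPolynomial.X (0 : Fin 2) + MvPolynomial.X (1 : Fin 2)) F = sub2 (MvPolynomial.X (0 : Fin 2)) (-MvPolynomial.X (0 : Fin 2) - MvPolynomial.X (1 : Fin 2)) F := by
      conv_rhs => rw [← heven]
      exact (sub2_comp' hX0 hs hnX0 hnX1 (by simp only [map_add, map_sub, map_neg, map_zero, MvPolynomial.aeval_X, Matrix.cons_val_zero, Matrix.cons_val_one, Matrix.head_cons]; try ring) (by simp only [map_add, map_sub, map_neg, map_zero, MvPolynomial.aeval_X, Matrix.cons_val_zero, Matrix.cons_val_one, Matrix.head_cons]; try ring) hnX0 hplus F).symm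
    rw [hnegs1, hnegs2] at h0
    simp only [cs, cnX0, cnX1, cX0, cX1] at h0
    -- h0 : (-X 0 - X 1) * F = -X 0 * expMv (-X 1) * s1F + -X 1 * expMv (X 0) * s2F
    have hK : (X 1 : S2) * (expMv (X 0 + X 1) - expMv (-X 0 - X 1)) * sub2 (MvPolynomial.X (0 : Fin 2)) (-MvPolynomial.X (0 : Fin 2) - MvPolynomial.X (1 : Fin 2)) F
        = ((X 0 + X 1) : S2) * (expMv (X 1) - expMv (-X 1)) * F := by
      linear_combination (-(X 1 * sub2 (MvPolynomial.X (0 : Fin 2)) (-MvPolynomial.X (0 : Fin 2) - MvPolynomial.X (1 : Fin 2)) F)) * m1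
        + (X 1 * sub2 (MvPolynomial.X (0 : Fin 2)) (-MvPolynomial.X (0 : Fin 2) - MvPolynomial.X (1 : Fin 2)) F) * m2
        + (expMv (-X 1)) * hEq + (expMv (X 1)) * h0
    rw [sh01, sh1] at hK
    have hcancel : (2 * (X 1 * (X 0 + X 1)) : S2) ≠ 0 :=
      mul_ne_zero two_ne_zero' (mul_ne_zero (X_ne_zero' 1) X_add_X_ne_zero)
    have hkey : u * sub2 (MvPolynomial.X (0 : Fin 2)) (-MvPolynomial.X (0 : Fin 2) - MvPolynomial.X (1 : Fin 2)) F = uu * F := by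
      apply mul_left_cancel₀ hcancel
      linear_combination hK
    refine ⟨F * v, ?_, ?_, ?_, ?_, ?_⟩
    · rw [sub2_mul hX1 hX0, hsym, hswapv]
    · rw [sub2_mul hnX0 hnX1, heven, hnegv]
    · rw [sub2_mul hX0 hs]
      linear_combination (v * sub2 (MvPolynomial.X (0 : Fin 2)) (-MvPolynomial.X (0 : Fin 2) - MvPolynomial.X (1 : Fin 2)) v) * hkey
        - (sub2 (MvPolynomial.X (0 : Fin 2)) (-MvPolynomial.X (0 : Fin 2) - MvPolynomial.X (1 : Fin 2)) v * sub2 (MvPolynomial.X (0 : Fin 2)) (-MvPolynomial.X (0 : Fin 2) - MvPolynomial.X (1 : Fin 2)) F) * huv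
        + (v * F) * hs2v
    · rw [sub2_mul hX0 hz, hF0, one_mul, sh0]
      linear_combination (2 * X 0) * hlamv
    · rw [sh01]
      linear_combination (-(2 * ((X 0 + X 1) * F))) * huv
  · rintro ⟨h, hswap, hneg, hs2h, hbd, hFh⟩
    clear hbd
    have hs1h : sub2 (MvPolynomial.X (1 : Fin 2)) (-MvPolynomial.X (0 : Fin 2) - MvPolynomial.X (1 : Fin 2)) h = h := by
      have c5 : sub2 (MvPolynomial.X (1 : Fin 2)) (MvPolynomial.X (0 : Fin 2)) (sub2 (MvPolynomial.X (0 : Fin 2)) (-MvPolynomial.X (0 : Fin 2) - MvPolynomial.X (1 : Fin 2)) h)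
          = sub2 (MvPolynomial.X (1 : Fin 2)) (-MvPolynomial.X (0 : Fin 2) - MvPolynomial.X (1 : Fin 2)) h :=
        sub2_comp' hX1 hX0 hX0 hs (by simp only [map_add, map_sub, map_neg, map_zero, MvPolynomial.aeval_X, Matrix.cons_val_zero, Matrix.cons_val_one, Matrix.head_cons]; try ring) (by simp only [map_add, map_sub, map_neg, map_zero, MvPolynomial.aeval_X, Matrix.cons_val_zero, Matrix.cons_val_one, Matrix.head_cons]; try ring) hX1 hs h
      rw [hs2h, hswap] at c5
      exact c5.symm
    have hFhc := hFh
    rw [← cadd, ← cs] at hFhc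
    have hFh2 : (((MvPolynomial.X (0 : Fin 2) + MvPolynomial.X (1 : Fin 2) : P2) : S2)) * F + ((MvPolynomial.X (0 : Fin 2) + MvPolynomial.X (1 : Fin 2) : P2) : S2) * F
        = (expMv ((MvPolynomial.X (0 : Fin 2) + MvPolynomial.X (1 : Fin 2) : P2) : S2) - expMv ((-MvPolynomial.X (0 : Fin 2) - MvPolynomial.X (1 : Fin 2) : P2) : S2)) * h := by
      linear_combination hFhc
    -- apply s1
    have hA := congrArg (sub2 (MvPolynomial.X (1 : Fin 2)) (-MvPolynomial.X (0 : Fin 2) - MvPolynomial.X (1 : Fin 2))) hFh2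
    rw [sub2_add, sub2_mul hX1 hs, sub2_mul hX1 hs, sub2_sub,
        sub2_coe' hX1 hs (Q := -MvPolynomial.X (0 : Fin 2)) (by simp only [map_add, map_sub, map_neg, map_zero, MvPolynomial.aeval_X, Matrix.cons_val_zero, Matrix.cons_val_one, Matrix.head_cons]; try ring),
        sub2_expMv' hX1 hs hplus (R := -MvPolynomial.X (0 : Fin 2)) (by simp only [map_add, map_sub, map_neg, map_zero, MvPolynomial.aeval_X, Matrix.cons_val_zero, Matrix.cons_val_one, Matrix.head_cons]; try ring) hnX0,
        sub2_expMv' hX1 hs hs (R := MvPolynomial.X (0 : Fin 2)) (by simp only [map_add, map_sub, map_neg, map_zero, MvPolynomial.aeval_X, Matrix.cons_val_zero, Matrix.cons_val_one, Matrix.head_cons]; try ring) hX0,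
        hs1h] at hA
    rw [cnX0, cX0] at hA
    -- apply s2
    have hB := congrArg (sub2 (MvPolynomial.X (0 : Fin 2)) (-MvPolynomial.X (0 : Fin 2) - MvPolynomial.X (1 : Fin 2))) hFh2
    rw [sub2_add, sub2_mul hX0 hs, sub2_mul hX0 hs, sub2_sub,
        sub2_coe' hX0 hs (Q := -MvPolynomial.X (1 : Fin 2)) (by simp only [map_add, map_sub, map_neg, map_zero, MvPolynomial.aeval_X, Matrix.cons_val_zero, Matrix.cons_val_one, Matrix.head_cons]; try ring),
        sub2_expMv' hX0 hs hplus (R := -MvPolynomial.X (1 : Fin 2)) (by simp only [map_add, map_sub, map_neg, map_zero, MvPolynomial.aeval_X, Matrix.cons_val_zero, Matrix.cons_val_one, Matrix.head_cons]; try ring) hnX1,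
        sub2_expMv' hX0 hs hs (R := MvPolynomial.X (1 : Fin 2)) (by simp only [map_add, map_sub, map_neg, map_zero, MvPolynomial.aeval_X, Matrix.cons_val_zero, Matrix.cons_val_one, Matrix.head_cons]; try ring) hX1,
        hs2h] at hB
    rw [cnX1, cX1] at hB
    apply mul_left_cancel₀ two_ne_zero'
    linear_combination hFh - h * m1 + h * m2 + (expMv (X 1)) * hA + (expMv (-X 0)) * hB


end
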